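/- Let A be a Banach function algebra on a compact Hausdorff space X, and let K be a closed subset of X such that I(K) = {f ∈ A : f ≡ 0 on K} is the zero ideal. Suppose that A is strongly regular at every point of K. Then (a) every character of A is an evaluation character ε_x for some x ∈ K, and moreover K = X (so the character space of A is X = K), and (b) A is normal on X. -/
import Mathlib


open Topology

/-- If `φ` is a character of `B` that differs from evaluation at `x`, and `B` is strongly
regular at `x`, then there is `e` with `φ e = 1` vanishing near `x`. -/
theorem key_point {X : Type*} [TopologicalSpace X]
    {B : Type*} [NormedCommRing B] [NormedAlgebra ℂ B] [CompleteSpace B]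
    (ι : B →ₐ[ℂ] C(X, ℂ)) (φ : B →ₐ[ℂ] ℂ) {x : X}
    (hsr : {f : B | ι f x = 0} ⊆ closure {f : B | ∃ U ∈ 𝓝 x, ∀ y ∈ U, ι f y = 0})
    (hne : ∃ g : B, φ g ≠ ι g x) :
    ∃ e : B, φ e = 1 ∧ ∃ U ∈ 𝓝 x, ∀ y ∈ U, ι e y = 0 := by
  obtain ⟨g, hg⟩ := hne
  set k : B := g - (ι g x) • 1 with hk
  have hkx : ι k x = 0 := by
    simp [hk]
  have hφk : φ k ≠ 0 := by
    simp only [hk, map_sub, map_smul, map_one, smul_eq_mul, mul_one]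
    exact sub_ne_zero_of_ne hg
  have hf : ((φ k)⁻¹ • k) ∈ closure {f : B | ∃ U ∈ 𝓝 x, ∀ y ∈ U, ι f y = 0} := by
    apply hsr
    simp [hkx]
  have hφf : φ ((φ k)⁻¹ • k) = 1 := by
    simp [map_smul, inv_mul_cancel₀ hφk]
  have hopen : IsOpen {f : B | φ f ≠ 0} :=
    (isOpen_compl_singleton).preimage (map_continuous φ)
  obtain ⟨j, hj1, hj2⟩ := mem_closure_iff.mp hf _ hopen (by simp [hφf])
  obtain ⟨U, hU, hUj⟩ := hj2
  refine ⟨(φ j)⁻¹ • j, by simp [map_smul, inv_mul_cancel₀ hj1], U, hU, fun y hy => ?_⟩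
  simp [map_smul, hUj y hy]

/-- Compact version: if `φ` differs from evaluation at every point of a compact set `S`
at which `B` is strongly regular, then there is `e` with `φ e = 1` vanishing on an open
neighbourhood of `S`. -/
theorem key_compact {X : Type*} [TopologicalSpace X]
    {B : Type*} [NormedCommRing B] [NormedAlgebra ℂ B] [CompleteSpace B]
    (ι : B →ₐ[ℂ] C(X, ℂ)) (φ : B →ₐ[ℂ] ℂ) {S : Set X} (hS : IsCompact S)
    (hsr : ∀ x ∈ S, {f : B | ι f x = 0} ⊆ closure {f : B | ∃ U ∈ 𝓝 x, ∀ y ∈ U, ι f y = 0})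
    (hne : ∀ x ∈ S, ∃ g : B, φ g ≠ ι g x) :
    ∃ e : B, ∃ V : Set X, φ e = 1 ∧ IsOpen V ∧ S ⊆ V ∧ ∀ y ∈ V, ι e y = 0 := by
  have choice : ∀ x ∈ S, ∃ e : B, φ e = 1 ∧ ∃ U, IsOpen U ∧ x ∈ U ∧ ∀ y ∈ U, ι e y = 0 := by
    intro x hx
    obtain ⟨e, he1, U, hU, hUe⟩ := key_point ι φ (hsr x hx) (hne x hx)
    exact ⟨e, he1, interior U, isOpen_interior, mem_interior_iff_mem_nhds.mpr hU,
      fun y hy => hUe y (interior_subset hy)⟩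
  choose e he U hUo hxU hUe using choice
  obtain ⟨t, ht⟩ := hS.elim_nhds_subcover' U (fun x hx => (hUo x hx).mem_nhds (hxU x hx))
  refine ⟨∏ x ∈ t, e x x.2, ⋃ x ∈ t, U x x.2, ?_, ?_, ht, ?_⟩
  · rw [map_prod]
    exact Finset.prod_eq_one fun x hx => he x x.2
  · exact isOpen_biUnion fun x hx => hUo x x.2
  · intro y hy
    simp only [Set.mem_iUnion] at hy
    obtain ⟨x, hxt, hyU⟩ := hy
    rw [map_prod, ContinuousMap.prod_apply]
    exact Finset.prod_eq_zero hxt (hUe x x.2 y hyU)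

/-- The ideal of elements of `B` vanishing on a neighbourhood of `E`. -/
def vanishNbhdIdeal {X : Type*} [TopologicalSpace X]
    {B : Type*} [NormedCommRing B] [NormedAlgebra ℂ B]
    (ι : B →ₐ[ℂ] C(X, ℂ)) (E : Set X) : Ideal B where
  carrier := {f | ∃ V, IsOpen V ∧ E ⊆ V ∧ ∀ y ∈ V, ι f y = 0}
  zero_mem' := ⟨Set.univ, isOpen_univ, Set.subset_univ _, fun y _ => by simp⟩
  add_mem' := by
    rintro f g ⟨V, hVo, hEV, hVf⟩ ⟨W, hWo, hEW, hWg⟩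
    exact ⟨V ∩ W, hVo.inter hWo, Set.subset_inter hEV hEW,
      fun y hy => by simp [hVf y hy.1, hWg y hy.2]⟩
  smul_mem' := by
    rintro c f ⟨V, hVo, hEV, hVf⟩
    exact ⟨V, hVo, hEV, fun y hy => by simp [smul_eq_mul, hVf y hy]⟩

/-- **Mortini's theorem.** If `B` is a Banach function algebra on a compact Hausdorff
space `X` (realised via an injective algebra homomorphism `ι` into `C(X)` whose range
separates points), `K ⊆ X` is closed with `I(K) = {0}`, and `B` is strongly regular at
every point of `K`, then every character of `B` is evaluation at a point of `K`,
`K = X`, and `B` is normal on `X`. -/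
theorem stmt_1 {X : Type*} [TopologicalSpace X] [CompactSpace X] [T2Space X]
    {B : Type*} [NormedCommRing B] [NormedAlgebra ℂ B] [CompleteSpace B]
    (ι : B →ₐ[ℂ] C(X, ℂ)) (hι : Function.Injective ι)
    (hsep : ∀ x y : X, x ≠ y → ∃ f : B, ι f x ≠ ι f y)
    (K : Set X) (hK : IsClosed K)
    (hIK : ∀ f : B, (∀ x ∈ K, ι f x = 0) → f = 0)
    (hsr : ∀ x ∈ K,
      {f : B | ι f x = 0} ⊆ closure {f : B | ∃ U ∈ 𝓝 x, ∀ y ∈ U, ι f y = 0}) :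
    (∀ φ : B →ₐ[ℂ] ℂ, ∃ x ∈ K, ∀ f : B, φ f = ι f x) ∧ K = Set.univ ∧
    (∀ E F : Set X, IsClosed E → IsClosed F → Disjoint E F →
      ∃ f : B, (∀ x ∈ E, ι f x = 0) ∧ (∀ x ∈ F, ι f x = 1)) := by
  have parta : ∀ φ : B →ₐ[ℂ] ℂ, ∃ x ∈ K, ∀ f : B, φ f = ι f x := by
    intro φ
    by_contra h
    push_neg at h
    obtain ⟨e, V, hφe, hVo, hKV, hVe⟩ := key_compact ι φ hK.isCompact hsr h
    have he0 : e = 0 := hIK e fun x hx => hVe x (hKV hx)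
    rw [he0, map_zero] at hφe
    exact zero_ne_one hφe
  have hKuniv : K = Set.univ := by
    ext x0
    simp only [Set.mem_univ, iff_true]
    obtain ⟨x, hxK, hx⟩ := parta ((ContinuousMap.evalAlgHom ℂ ℂ x0).comp ι)
    by_contra hx0
    obtain ⟨f, hf⟩ := hsep x0 x (fun h => hx0 (h ▸ hxK))
    exact hf (hx f)
  refine ⟨parta, hKuniv, ?_⟩
  intro E F hE hF hEF
  set JE := vanishNbhdIdeal ι E with hJE
  set JF := vanishNbhdIdeal ι F with hJF
  have hsr' : ∀ x : X, {f : B | ι f x = 0} ⊆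
      closure {f : B | ∃ U ∈ 𝓝 x, ∀ y ∈ U, ι f y = 0} := by
    intro x
    exact hsr x (by rw [hKuniv]; trivial)
  have hsup : JE ⊔ JF = ⊤ := by
    by_contra hne
    obtain ⟨M, hMmax, hM⟩ := Ideal.exists_le_maximal _ hne
    haveI := hMmax
    obtain ⟨x, hxK, hx⟩ := parta (WeakDual.CharacterSpace.equivAlgHom M.toCharacterSpace)
    have hxchar : ∀ f : B, (M.toCharacterSpace : B → ℂ) f = ι f x := by
      intro f
      have := hx f
      rwa [WeakDual.CharacterSpace.equivAlgHom_coe] at this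
    have hxEF : x ∉ E ∨ x ∉ F := by
      by_contra hc
      push_neg at hc
      exact (Set.disjoint_left.mp hEF hc.1) hc.2
    have key : ∀ (G : Set X), IsClosed G → x ∉ G →
        ∃ e : B, e ∈ vanishNbhdIdeal ι G ∧ ι e x = 1 := by
      intro G hG hxG
      obtain ⟨e, V, hφe, hVo, hGV, hVe⟩ :=
        key_compact ι ((ContinuousMap.evalAlgHom ℂ ℂ x).comp ι) hG.isCompact
          (fun y _ => hsr' y)
          (fun y hy => by
            obtain ⟨g, hg⟩ := hsep x y (fun h => hxG (h ▸ hy))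
            exact ⟨g, hg⟩)
      exact ⟨e, ⟨V, hVo, hGV, hVe⟩, hφe⟩
    rcases hxEF with hxE | hxF
    · obtain ⟨e, heJ, hex⟩ := key E hE hxE
      have heM : e ∈ M := hM (Ideal.mem_sup_left heJ)
      have := M.toCharacterSpace_apply_eq_zero_of_mem heM
      rw [hxchar e, hex] at this
      exact one_ne_zero this
    · obtain ⟨e, heJ, hex⟩ := key F hF hxF
      have heM : e ∈ M := hM (Ideal.mem_sup_right heJ)
      have := M.toCharacterSpace_apply_eq_zero_of_mem heM
      rw [hxchar e, hex] at this
      exact one_ne_zero this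
  have h1 : (1 : B) ∈ JE ⊔ JF := hsup ▸ Submodule.mem_top
  obtain ⟨g, hg, h, hh, hgh⟩ := Submodule.mem_sup.mp h1
  obtain ⟨V, hVo, hEV, hVg⟩ := hg
  obtain ⟨W, hWo, hFW, hWh⟩ := hh
  refine ⟨g, fun y hy => hVg y (hEV hy), fun y hy => ?_⟩
  have : ι g y + ι h y = 1 := by
    have := congrArg (fun b => ι b y) hgh
    simpa using this
  rw [hWh y (hFW hy), add_zero] at this
  exact this
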